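/- Weighting vector of a subset via Schur complement: let Y ⊆ X be finite subsets of ℝⁿ, and order the points of X so that those of Y come first, writing ζ_X = [[ζ_Y, ζ_{Y,Ȳ}],[ζ_{Y,Ȳ}ᵀ, ζ_{Ȳ}]] where Ȳ = X \ Y. Then w_X = [w_Y; 0] + ρ 𝟙 and Mag(X) = Mag(Y) + 𝟙ᵀ ρ 𝟙, where ρ = ρ_{ζ_X ζ_Y} is the block matrix built from ζ_Y⁻¹ and the Schur complement (ζ_X/ζ_Y)⁻¹ as in the block inverse formula. -/

import Mathlib

open Matrix Real Set MeasureTheory Finset Nat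

variable {ι : Type*} [Fintype ι] {n : ℕ}

lemma gram_pow_psd (m : ℕ) (w : ι → EuclideanSpace ℝ (Fin n)) (d : ι → ℝ) :
    0 ≤ ∑ i, ∑ j, d i * d j * (inner ℝ (w i) (w j) : ℝ) ^ m := by
  have hexp : ∀ i j : ι, (inner ℝ (w i) (w j) : ℝ) ^ m
      = ∑ f : Fin m → Fin n, (∏ t, w i (f t)) * (∏ t, w j (f t)) := by
    intro i j
    have h1 : (inner ℝ (w i) (w j) : ℝ) = ∑ a, w i a * w j a := by
      rw [PiLp.inner_apply]; simp [RCLike.inner_apply]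
      exact Finset.sum_congr rfl fun _ _ => mul_comm _ _
    have h2 : (∑ a, w i a * w j a) ^ m = ∏ _t : Fin m, (∑ a, w i a * w j a) := by
      rw [Finset.prod_const, Finset.card_univ, Fintype.card_fin]
    rw [h1, h2, Finset.prod_univ_sum]
    exact Finset.sum_congr rfl fun f _ => Finset.prod_mul_distrib
  have key : ∑ i, ∑ j, d i * d j * (inner ℝ (w i) (w j) : ℝ) ^ m
      = ∑ f : Fin m → Fin n, (∑ i, d i * ∏ t, w i (f t)) ^ 2 := by
    simp_rw [hexp, Finset.mul_sum]
    calc (∑ i, ∑ j, ∑ f : Fin m → Fin n,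
            d i * d j * ((∏ t, w i (f t)) * ∏ t, w j (f t)))
        = ∑ i, ∑ f : Fin m → Fin n, ∑ j,
            d i * d j * ((∏ t, w i (f t)) * ∏ t, w j (f t)) :=
          Finset.sum_congr rfl fun i _ => Finset.sum_comm
      _ = ∑ f : Fin m → Fin n, ∑ i, ∑ j,
            d i * d j * ((∏ t, w i (f t)) * ∏ t, w j (f t)) := Finset.sum_comm
      _ = ∑ f : Fin m → Fin n, (∑ i, d i * ∏ t, w i (f t)) ^ 2 := by
          refine Finset.sum_congr rfl fun f _ => ?_
          rw [sq, Finset.sum_mul_sum]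
          exact Finset.sum_congr rfl fun i _ => Finset.sum_congr rfl fun j _ => by ring
  rw [key]
  exact Finset.sum_nonneg fun f _ => sq_nonneg _

lemma gauss_psd (t : ℝ) (ht : 0 ≤ t) (v : ι → EuclideanSpace ℝ (Fin n)) (c : ι → ℝ) :
    0 ≤ ∑ i, ∑ j, c i * c j * Real.exp (-(‖v i - v j‖ ^ 2 * t)) := by
  set w : ι → EuclideanSpace ℝ (Fin n) := fun i => Real.sqrt (2 * t) • v i with hw
  set D : ι → ℝ := fun i => c i * Real.exp (-(‖v i‖ ^ 2 * t)) with hD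
  have hinner : ∀ i j, (inner ℝ (w i) (w j) : ℝ) = 2 * t * inner ℝ (v i) (v j) := by
    intro i j
    rw [hw]
    rw [real_inner_smul_left, real_inner_smul_right, ← mul_assoc,
      Real.mul_self_sqrt (by linarith)]
  have hterm : ∀ i j, c i * c j * Real.exp (-(‖v i - v j‖ ^ 2 * t))
      = D i * D j * Real.exp (inner ℝ (w i) (w j)) := by
    intro i j
    have h : -(‖v i - v j‖ ^ 2 * t)
        = -(‖v i‖ ^ 2 * t) + -(‖v j‖ ^ 2 * t) + inner ℝ (w i) (w j) := by
      rw [hinner, norm_sub_sq_real]; ring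
    rw [h, Real.exp_add, Real.exp_add, hD]; ring
  simp_rw [hterm]
  have hexp : ∀ i j, Real.exp (inner ℝ (w i) (w j) : ℝ)
      = ∑' m : ℕ, (inner ℝ (w i) (w j) : ℝ) ^ m / m ! := by
    intro i j
    rw [Real.exp_eq_exp_ℝ, NormedSpace.exp_eq_tsum_div]
  have hsummable : ∀ (x : ℝ) (a b : ℝ), Summable (fun m : ℕ => a * b * (x ^ m / m !)) :=
    fun x a b => (Real.summable_pow_div_factorial x).mul_left _
  have hswap : ∑ i, ∑ j, D i * D j * Real.exp (inner ℝ (w i) (w j) : ℝ)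
      = ∑' m : ℕ, ∑ i, ∑ j, D i * D j * ((inner ℝ (w i) (w j) : ℝ) ^ m / m !) := by
    simp_rw [hexp]
    rw [eq_comm]
    calc ∑' m : ℕ, ∑ i, ∑ j, D i * D j * ((inner ℝ (w i) (w j) : ℝ) ^ m / m !)
        = ∑ i, ∑' m : ℕ, ∑ j, D i * D j * ((inner ℝ (w i) (w j) : ℝ) ^ m / m !) := by
          rw [Summable.tsum_finsetSum]
          intro i _
          exact summable_sum fun j _ => hsummable _ _ _
      _ = ∑ i, ∑ j, ∑' m : ℕ, D i * D j * ((inner ℝ (w i) (w j) : ℝ) ^ m / m !) := by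
          refine Finset.sum_congr rfl fun i _ => ?_
          rw [Summable.tsum_finsetSum]
          intro j _
          exact hsummable _ _ _
      _ = ∑ i, ∑ j, D i * D j * ∑' m : ℕ, ((inner ℝ (w i) (w j) : ℝ) ^ m / m !) := by
          refine Finset.sum_congr rfl fun i _ => Finset.sum_congr rfl fun j _ => ?_
          rw [tsum_mul_left]
  rw [hswap]
  refine tsum_nonneg fun m => ?_
  have : ∑ i, ∑ j, D i * D j * ((inner ℝ (w i) (w j) : ℝ) ^ m / m !)
      = (∑ i, ∑ j, D i * D j * (inner ℝ (w i) (w j) : ℝ) ^ m) / m ! := by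
    rw [Finset.sum_div]
    refine Finset.sum_congr rfl fun i _ => ?_
    rw [Finset.sum_div]
    exact Finset.sum_congr rfl fun j _ => by ring
  rw [this]
  exact div_nonneg (gram_pow_psd m w D) (by positivity)

namespace MagAux

/-- the subordination integrand -/
noncomputable def f (a s : ℝ) : ℝ := s ^ (-(1:ℝ)/2) * Real.exp (-s - a ^ 2 / (4 * s))

/-- the subordination integral -/
noncomputable def Fs (a : ℝ) : ℝ := ∫ s in Ioi (0:ℝ), f a s

lemma f_nonneg (a s : ℝ) (hs : 0 < s) : 0 ≤ f a s :=
  mul_nonneg (Real.rpow_nonneg hs.le _) (Real.exp_pos _).le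

lemma contOn_f (a : ℝ) : ContinuousOn (fun s => f a s) (Ioi 0) := by
  apply ContinuousOn.mul
  · exact fun s hs =>
      (Real.continuousAt_rpow_const s _ (Or.inl (ne_of_gt hs))).continuousWithinAt
  · refine Real.continuous_exp.comp_continuousOn ?_
    refine (continuous_neg.continuousOn).sub (continuousOn_const.div ?_ ?_)
    · exact (continuous_const.mul continuous_id).continuousOn
    · exact fun s hs => by have : (0:ℝ) < s := hs; positivity

lemma integrableOn_f (a : ℝ) : IntegrableOn (fun s => f a s) (Ioi 0) := by
  have hG : IntegrableOn (fun x : ℝ => Real.exp (-x) * x ^ ((1:ℝ)/2 - 1)) (Ioi 0) :=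
    Real.GammaIntegral_convergent one_half_pos
  refine hG.mono' ((contOn_f a).aestronglyMeasurable measurableSet_Ioi) ?_
  filter_upwards [ae_restrict_mem measurableSet_Ioi] with s hs
  have hs' : (0:ℝ) < s := hs
  rw [Real.norm_eq_abs, abs_of_nonneg (f_nonneg a s hs')]
  have h1 : Real.exp (-s - a ^ 2 / (4 * s)) ≤ Real.exp (-s) := by
    apply Real.exp_le_exp.mpr
    have : 0 ≤ a ^ 2 / (4 * s) := by positivity
    linarith
  have h2 : ((1:ℝ)/2 - 1) = -(1:ℝ)/2 := by norm_num
  calc f a s ≤ s ^ (-(1:ℝ)/2) * Real.exp (-s) :=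
        mul_le_mul_of_nonneg_left h1 (Real.rpow_nonneg hs'.le _)
    _ = Real.exp (-s) * s ^ ((1:ℝ)/2 - 1) := by rw [h2, mul_comm]

lemma Fs_zero : Fs 0 = Real.Gamma (1/2) := by
  rw [Fs, Real.Gamma_eq_integral one_half_pos]
  refine setIntegral_congr_fun measurableSet_Ioi fun s hs => ?_
  have : ((1:ℝ)/2 - 1) = -(1:ℝ)/2 := by norm_num
  rw [f, this, mul_comm]
  norm_num

lemma Fs_zero_pos : 0 < Fs 0 := Fs_zero ▸ Real.Gamma_pos_of_pos one_half_pos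

end MagAux

namespace MagAux

lemma subst_J (a : ℝ) (ha : 0 < a) :
    ∫ s in Ioi (0:ℝ), (a / (2 * s)) * f a s = Fs a := by
  have h4 : (0:ℝ) < a ^ 2 / 4 := by positivity
  -- step 1 : scaling
  have step1 : (∫ x in Ioi (0:ℝ), f a (a ^ 2 / 4 * x)) = (a ^ 2 / 4)⁻¹ * Fs a := by
    have := integral_comp_mul_left_Ioi (fun u => f a u) 0 h4
    simpa [mul_zero, smul_eq_mul, Fs] using this
  -- step 2 : inversion
  have step2 : (∫ x in Ioi (0:ℝ), (|(-1:ℝ)| * x ^ ((-1:ℝ) - 1)) • f a (a ^ 2 / 4 * x ^ (-1:ℝ)))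
      = ∫ y in Ioi (0:ℝ), f a (a ^ 2 / 4 * y) :=
    integral_comp_rpow_Ioi (fun y => f a (a ^ 2 / 4 * y)) (by norm_num : (-1:ℝ) ≠ 0)
  -- identify LHS of step2 with the J integrand
  have key : ∀ x ∈ Ioi (0:ℝ),
      (a / (2 * x)) * f a x
        = (a ^ 2 / 4) * ((|(-1:ℝ)| * x ^ ((-1:ℝ) - 1)) • f a (a ^ 2 / 4 * x ^ (-1:ℝ))) := by
    intro x hx
    have hx' : (0:ℝ) < x := hx
    have hrx : (0:ℝ) < Real.sqrt x := Real.sqrt_pos.mpr hx'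
    have hxinv : a ^ 2 / 4 * x ^ (-1:ℝ) = a ^ 2 / (4 * x) := by
      rw [Real.rpow_neg_one]; field_simp
    have hexp : -(a ^ 2 / (4 * x)) - a ^ 2 / (4 * (a ^ 2 / (4 * x))) = -x - a ^ 2 / (4 * x) := by
      rw [show 4 * (a ^ 2 / (4 * x)) = a ^ 2 / x by field_simp,
        show a ^ 2 / (a ^ 2 / x) = x by field_simp]
      ring
    have hpow : (a ^ 2 / (4 * x)) ^ (-(1:ℝ)/2) = 2 * Real.sqrt x / a := by
      have h2x : (a / (2 * Real.sqrt x)) ^ 2 = a ^ 2 / (4 * x) := by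
        rw [div_pow, mul_pow, Real.sq_sqrt hx'.le]; norm_num
      rw [show (-(1:ℝ)/2) = -(1/2) by norm_num, Real.rpow_neg (by positivity), ← h2x,
        ← Real.sqrt_eq_rpow, Real.sqrt_sq (by positivity), inv_div]
    have hx2 : x ^ ((-1:ℝ) - 1) = (x ^ 2)⁻¹ := by
      rw [show ((-1:ℝ) - 1) = -(2:ℕ) by norm_num, Real.rpow_neg hx'.le, Real.rpow_natCast]
    have hfx : x ^ (-(1:ℝ)/2) = (Real.sqrt x)⁻¹ := by
      rw [show (-(1:ℝ)/2) = -(1/2) by norm_num, Real.rpow_neg hx'.le, ← Real.sqrt_eq_rpow]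
    rw [smul_eq_mul, hxinv, f, f, hexp, hpow, hx2, hfx, abs_neg, abs_one]
    set s := Real.sqrt x with hs
    have hss : s ^ 2 = x := Real.sq_sqrt hx'.le
    rw [← hss]
    have hs0 : s ≠ 0 := ne_of_gt hrx
    field_simp
    ring
  have heq : ∫ s in Ioi (0:ℝ), (a / (2 * s)) * f a s
      = ∫ x in Ioi (0:ℝ),
          (a ^ 2 / 4) * ((|(-1:ℝ)| * x ^ ((-1:ℝ) - 1)) • f a (a ^ 2 / 4 * x ^ (-1:ℝ))) :=
    setIntegral_congr_fun measurableSet_Ioi key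
  rw [heq, integral_const_mul, step2, step1]
  field_simp

end MagAux

namespace MagAux

lemma exp_neg_le_inv {x : ℝ} (hx : 0 < x) : Real.exp (-x) ≤ x⁻¹ := by
  rw [Real.exp_neg]
  exact inv_anti₀ hx (by linarith [Real.add_one_le_exp x])

lemma f_zero_eq (s : ℝ) : f 0 s = s ^ (-(1:ℝ)/2) * Real.exp (-s) := by
  rw [f]
  norm_num

lemma hasDerivAt_Fs {a : ℝ} (ha : 0 < a) : HasDerivAt Fs (-Fs a) a := by
  have hmeas : ∀ b : ℝ, AEStronglyMeasurable (fun s => f b s)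
      ((volume : Measure ℝ).restrict (Ioi 0)) :=
    fun b => (contOn_f b).aestronglyMeasurable measurableSet_Ioi
  have hF'cont : ContinuousOn (fun s => -(a / (2 * s)) * f a s) (Ioi 0) := by
    refine ContinuousOn.mul ?_ (contOn_f a)
    refine ContinuousOn.neg (continuousOn_const.div ?_ ?_)
    · exact (continuous_const.mul continuous_id).continuousOn
    · exact fun s hs => by have : (0:ℝ) < s := hs; positivity
  have key := hasDerivAt_integral_of_dominated_loc_of_deriv_le (s := Metric.ball a (a / 2))
    (μ := (volume : Measure ℝ).restrict (Ioi 0))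
    (F := fun b s => f b s) (F' := fun b s => -(b / (2 * s)) * f b s)
    (bound := fun s => (4 / a) * f 0 s) (x₀ := a)
    (Metric.ball_mem_nhds a (by positivity))
    (Filter.Eventually.of_forall hmeas)
    (integrableOn_f a)
    (hF'cont.aestronglyMeasurable measurableSet_Ioi)
    ?_ ((integrableOn_f 0).const_mul _) ?_
  · obtain ⟨-, hd⟩ := key
    have : (∫ s in Ioi (0:ℝ), -(a / (2 * s)) * f a s) = -Fs a := by
      rw [← subst_J a ha, ← integral_neg]
      exact setIntegral_congr_fun measurableSet_Ioi fun s _ => by ring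
    rwa [this] at hd
  · -- bound
    filter_upwards [ae_restrict_mem measurableSet_Ioi] with s hs b hb
    have hs' : (0:ℝ) < s := hs
    rw [Metric.mem_ball, Real.dist_eq, abs_lt] at hb
    have hb1 : a / 2 < b := by linarith
    have hb0 : 0 < b := lt_trans (by positivity) hb1
    have h1 : Real.exp (-(b ^ 2 / (4 * s))) ≤ (b ^ 2 / (4 * s))⁻¹ :=
      exp_neg_le_inv (by positivity)
    have hsplit : f b s = s ^ (-(1:ℝ)/2) * Real.exp (-s) * Real.exp (-(b ^ 2 / (4 * s))) := by
      rw [f, show -s - b ^ 2 / (4 * s) = -s + -(b ^ 2 / (4 * s)) by ring, Real.exp_add]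
      ring
    have hnn : 0 ≤ b / (2 * s) * f b s :=
      mul_nonneg (by positivity) (f_nonneg b s hs')
    rw [Real.norm_eq_abs, neg_mul, abs_neg, abs_of_nonneg hnn]
    calc b / (2 * s) * f b s
        ≤ b / (2 * s) * (s ^ (-(1:ℝ)/2) * Real.exp (-s) * (b ^ 2 / (4 * s))⁻¹) := by
          rw [hsplit, mul_assoc, mul_assoc]
          refine mul_le_mul_of_nonneg_left ?_ (by positivity)
          rw [← mul_assoc, ← mul_assoc]
          exact mul_le_mul_of_nonneg_left h1 (by positivity)
      _ = (2 / b) * (s ^ (-(1:ℝ)/2) * Real.exp (-s)) := by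
          field_simp
          ring
      _ ≤ (4 / a) * (s ^ (-(1:ℝ)/2) * Real.exp (-s)) := by
          refine mul_le_mul_of_nonneg_right ?_ (by positivity)
          rw [div_le_div_iff₀ hb0 ha]
          nlinarith
      _ = (4 / a) * f 0 s := by rw [f_zero_eq]
  · -- differentiability
    filter_upwards [ae_restrict_mem measurableSet_Ioi] with s hs b _
    have hs' : (0:ℝ) < s := hs
    have h1 : HasDerivAt (fun b : ℝ => -s - b ^ 2 / (4 * s)) (-(b / (2 * s))) b := by
      have h := ((hasDerivAt_pow 2 b).div_const (4 * s)).const_sub (-s)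
      refine h.congr_deriv ?_
      field_simp
      ring
    have h2 := (h1.exp).const_mul (s ^ (-(1:ℝ)/2))
    exact h2.congr_deriv (by rw [f]; ring)

lemma Fs_eq {a : ℝ} (ha : 0 ≤ a) : Fs a = Real.exp (-a) * Fs 0 := by
  rcases eq_or_lt_of_le ha with rfl | ha'
  · simp
  have hG : ∀ x : ℝ, 0 < x → HasDerivAt (fun y => Real.exp y * Fs y) 0 x := by
    intro x hx
    have h := (Real.hasDerivAt_exp x).mul (hasDerivAt_Fs hx)
    exact h.congr_deriv (by ring)
  have hconst : ∀ ε ∈ Ioc (0:ℝ) a, Real.exp a * Fs a = Real.exp ε * Fs ε := by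
    intro ε hε
    have := constant_of_has_deriv_right_zero (f := fun y => Real.exp y * Fs y)
      (a := ε) (b := a)
      (fun x hx => ((hG x (lt_of_lt_of_le hε.1 hx.1)).continuousAt).continuousWithinAt)
      (fun x hx => (hG x (lt_of_lt_of_le hε.1 hx.1)).hasDerivWithinAt)
    exact this a ⟨hε.2, le_refl a⟩
  have hcont0 : ContinuousWithinAt Fs (Ioi 0) 0 := by
    apply continuousWithinAt_of_dominated (bound := fun s => f 0 s)
      (F := fun b s => f b s)
    · exact Filter.Eventually.of_forall fun b =>
        (contOn_f b).aestronglyMeasurable measurableSet_Ioi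
    · refine Filter.Eventually.of_forall fun b => ?_
      filter_upwards [ae_restrict_mem measurableSet_Ioi] with s hs
      have hs' : (0:ℝ) < s := hs
      rw [Real.norm_eq_abs, abs_of_nonneg (f_nonneg b s hs'), f, f_zero_eq]
      refine mul_le_mul_of_nonneg_left (Real.exp_le_exp.mpr ?_) (Real.rpow_nonneg hs'.le _)
      have : 0 ≤ b ^ 2 / (4 * s) := by positivity
      linarith
    · exact integrableOn_f 0
    · filter_upwards [ae_restrict_mem measurableSet_Ioi] with s hs
      apply Continuous.continuousWithinAt
      apply continuous_const.mul
      apply Real.continuous_exp.comp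
      have h4s : (4 * s) ≠ 0 := by have : (0:ℝ) < s := hs; positivity
      continuity
  have htend : Filter.Tendsto (fun ε => Real.exp ε * Fs ε) (nhdsWithin 0 (Ioi 0))
      (nhds (Real.exp 0 * Fs 0)) := by
    refine Filter.Tendsto.mul ?_ hcont0
    exact (Real.continuous_exp.continuousAt).continuousWithinAt
  have hev : ∀ᶠ ε in nhdsWithin (0:ℝ) (Ioi 0),
      (fun ε => Real.exp ε * Fs ε) ε = Real.exp a * Fs a := by
    filter_upwards [Ioc_mem_nhdsGT ha'] with ε hε
    exact (hconst ε hε).symm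
  have := tendsto_nhds_unique (htend.congr' hev) tendsto_const_nhds
  rw [Real.exp_zero, one_mul] at this
  have hexp : Real.exp a ≠ 0 := Real.exp_ne_zero a
  field_simp [Real.exp_neg]
  rw [this, ← mul_assoc, ← Real.exp_add, neg_add_cancel, Real.exp_zero, one_mul]

end MagAux

namespace MagAux

lemma sum_exp_dist_pos {ι : Type*} [Fintype ι] {n : ℕ}
    (p : ι → EuclideanSpace ℝ (Fin n)) (hp : Function.Injective p)
    {c : ι → ℝ} (hc : c ≠ 0) :
    0 < ∑ i, ∑ j, c i * c j * Real.exp (-dist (p i) (p j)) := by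
  classical
  set d : ι → ι → ℝ := fun i j => dist (p i) (p j) with hd
  set Q : ℝ → ℝ := fun s => ∑ i, ∑ j, c i * c j * f (d i j) s with hQ
  set q : ℝ → ℝ := fun s => ∑ i, ∑ j, c i * c j * Real.exp (-(‖p i - p j‖ ^ 2 * (4 * s)⁻¹))
    with hq
  have hint : ∀ i j : ι, IntegrableOn (fun s => c i * c j * f (d i j) s) (Ioi 0) :=
    fun i j => (integrableOn_f (d i j)).const_mul _
  have hQint : IntegrableOn Q (Ioi 0) := by
    apply integrable_finset_sum
    exact fun i _ => integrable_finset_sum _ fun j _ => hint i j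
  have hQeq : ∀ s ∈ Ioi (0:ℝ), Q s = s ^ (-(1:ℝ)/2) * Real.exp (-s) * q s := by
    intro s hs
    have hs' : (0:ℝ) < s := hs
    rw [hQ, hq, Finset.mul_sum]
    refine Finset.sum_congr rfl fun i _ => ?_
    rw [Finset.mul_sum]
    refine Finset.sum_congr rfl fun j _ => ?_
    rw [f, hd]
    rw [show -s - dist (p i) (p j) ^ 2 / (4 * s)
        = -s + -(‖p i - p j‖ ^ 2 * (4 * s)⁻¹) by
      rw [dist_eq_norm]; field_simp; ring]
    rw [Real.exp_add]
    ring
  have hQnn : ∀ s ∈ Ioi (0:ℝ), 0 ≤ Q s := by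
    intro s hs
    have hs' : (0:ℝ) < s := hs
    rw [hQeq s hs]
    have hqs : 0 ≤ q s := gauss_psd ((4 * s)⁻¹) (by positivity) p c
    positivity
  -- the value of the double sum as an integral
  have hsum_int : ∑ i, ∑ j, c i * c j * Real.exp (-d i j)
      = (Fs 0)⁻¹ * ∫ s in Ioi (0:ℝ), Q s := by
    have hterm : ∀ i j : ι, Real.exp (-d i j) = (Fs 0)⁻¹ * Fs (d i j) := by
      intro i j
      rw [Fs_eq dist_nonneg]
      field_simp [ne_of_gt Fs_zero_pos]
      rfl
    have hswap : (∫ s in Ioi (0:ℝ), Q s) = ∑ i, ∑ j, c i * c j * Fs (d i j) := by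
      rw [hQ, integral_finset_sum _ fun i _ => integrable_finset_sum _ fun j _ => hint i j]
      refine Finset.sum_congr rfl fun i _ => ?_
      rw [integral_finset_sum _ fun j _ => hint i j]
      refine Finset.sum_congr rfl fun j _ => ?_
      rw [integral_const_mul]
      rfl
    rw [hswap, Finset.mul_sum]
    refine Finset.sum_congr rfl fun i _ => ?_
    rw [Finset.mul_sum]
    refine Finset.sum_congr rfl fun j _ => ?_
    rw [hterm]
    ring
  -- limit of q at 0⁺
  obtain ⟨i₀, hi₀⟩ := Function.ne_iff.mp hc
  simp only [Pi.zero_apply] at hi₀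
  have hL : (0:ℝ) < ∑ i, c i * c i :=
    Finset.sum_pos' (fun i _ => mul_self_nonneg _)
      ⟨i₀, Finset.mem_univ _, mul_self_pos.mpr hi₀⟩
  have hlim : Filter.Tendsto q (nhdsWithin 0 (Ioi 0)) (nhds (∑ i, c i * c i)) := by
    have : (∑ i, c i * c i)
        = ∑ i, ∑ j, (if i = j then c i * c i else (0:ℝ)) := by
      rw [eq_comm]
      refine Finset.sum_congr rfl fun i _ => ?_
      simp
    rw [this]
    apply tendsto_finset_sum
    intro i _
    apply tendsto_finset_sum
    intro j _
    rcases eq_or_ne i j with rfl | hij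
    · simp only [if_pos rfl]
      have : (fun s : ℝ => c i * c i * Real.exp (-(‖p i - p i‖ ^ 2 * (4 * s)⁻¹)))
          = fun _ => c i * c i := by
        funext s
        simp
      rw [this]
      exact tendsto_const_nhds
    · simp only [if_neg hij]
      have hdij : (0:ℝ) < ‖p i - p j‖ ^ 2 := by
        have h0 : p i - p j ≠ 0 := sub_ne_zero.mpr (fun h => hij (hp h))
        exact pow_pos (norm_pos_iff.mpr h0) 2
      have h1 : Filter.Tendsto (fun s : ℝ => ‖p i - p j‖ ^ 2 * (4 * s)⁻¹)
          (nhdsWithin 0 (Ioi 0)) Filter.atTop := by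
        have h2 : Filter.Tendsto (fun s : ℝ => (4 * s)⁻¹) (nhdsWithin 0 (Ioi 0))
            Filter.atTop := by
          have : (fun s : ℝ => (4 * s)⁻¹) = fun s : ℝ => 4⁻¹ * s⁻¹ := by
            funext s; rw [mul_inv]
          rw [this]
          exact (tendsto_inv_nhdsGT_zero).const_mul_atTop (by norm_num)
        exact h2.const_mul_atTop hdij
      have h3 : Filter.Tendsto
          (fun s : ℝ => Real.exp (-(‖p i - p j‖ ^ 2 * (4 * s)⁻¹)))
          (nhdsWithin 0 (Ioi 0)) (nhds 0) :=
        Real.tendsto_exp_neg_atTop_nhds_zero.comp h1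
      have := h3.const_mul (c i * c j)
      rwa [mul_zero] at this
  -- find a point where q is positive
  have hev : ∀ᶠ s in nhdsWithin (0:ℝ) (Ioi 0), (∑ i, c i * c i) / 2 < q s :=
    hlim.eventually (eventually_gt_nhds (by linarith))
  obtain ⟨s₀, hs₀q, hs₀⟩ := (hev.and self_mem_nhdsWithin).exists
  have hs₀' : (0:ℝ) < s₀ := hs₀
  have hQs₀ : 0 < Q s₀ := by
    rw [hQeq s₀ hs₀]
    have : 0 < q s₀ := lt_trans (by linarith) hs₀q
    positivity
  -- continuity of Q on Ioi 0
  have hQcont : ContinuousOn Q (Ioi 0) := by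
    apply continuousOn_finset_sum
    intro i _
    apply continuousOn_finset_sum
    intro j _
    exact (contOn_f (d i j)).const_smul (c i * c j)
  have hQca : ContinuousAt Q s₀ :=
    hQcont.continuousAt (isOpen_Ioi.mem_nhds hs₀)
  have hev2 : ∀ᶠ s in nhds s₀, 0 < Q s ∧ s ∈ Ioi (0:ℝ) :=
    (hQca.eventually (eventually_gt_nhds hQs₀)).and (isOpen_Ioi.eventually_mem hs₀)
  obtain ⟨ε, hε, hball⟩ := Metric.eventually_nhds_iff_ball.mp hev2
  have hsub : Metric.ball s₀ ε ⊆ Function.support Q ∩ Ioi 0 := by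
    intro s hs
    obtain ⟨h1, h2⟩ := hball s hs
    exact ⟨ne_of_gt h1, h2⟩
  have hμ : 0 < (volume : Measure ℝ) (Function.support Q ∩ Ioi 0) := by
    refine lt_of_lt_of_le ?_ (measure_mono hsub)
    rw [Real.volume_ball]
    simp only [ENNReal.ofReal_pos]
    linarith
  have hae : 0 ≤ᵐ[(volume : Measure ℝ).restrict (Ioi 0)] Q := by
    filter_upwards [ae_restrict_mem measurableSet_Ioi] with s hs
    exact hQnn s hs
  have hIpos : 0 < ∫ s in Ioi (0:ℝ), Q s :=
    (setIntegral_pos_iff_support_of_nonneg_ae hae hQint).mpr hμ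
  rw [hd] at hsum_int
  rw [hsum_int]
  exact mul_pos (inv_pos.mpr Fs_zero_pos) hIpos

end MagAux

namespace MagAux

lemma exp_dist_posDef {ι : Type*} [Fintype ι] [DecidableEq ι] {n : ℕ}
    (p : ι → EuclideanSpace ℝ (Fin n)) (hp : Function.Injective p) :
    (Matrix.of fun i j => Real.exp (-dist (p i) (p j))).PosDef := by
  rw [Matrix.posDef_iff_dotProduct_mulVec]
  constructor
  · ext i j
    simp only [Matrix.conjTranspose_apply, Matrix.of_apply, star_trivial]
    rw [dist_comm (p j) (p i)]
  · intro x hx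
    have h := sum_exp_dist_pos p hp hx
    refine lt_of_lt_of_eq h ?_
    simp only [dotProduct, Matrix.mulVec, Pi.star_apply, star_trivial,
      Matrix.of_apply, Finset.mul_sum]
    exact Finset.sum_congr rfl fun i _ => Finset.sum_congr rfl fun j _ => by ring

end MagAux

lemma MagAux.schur_right_inv {m p : Type*} [Fintype m] [Fintype p] [DecidableEq m] [DecidableEq p]
    (A : Matrix m m ℝ) (B : Matrix m p ℝ) (D : Matrix p p ℝ)
    (Ai : Matrix m m ℝ) (Si : Matrix p p ℝ)
    (hA : A * Ai = 1) (hS : (D - Bᵀ * Ai * B) * Si = 1) :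
    Matrix.fromBlocks A B Bᵀ D *
      (Matrix.fromBlocks Ai 0 0 0 +
        Matrix.fromBlocks (Ai * B * Si * Bᵀ * Ai) (-(Ai * B * Si)) (-(Si * Bᵀ * Ai)) Si) = 1 := by
  have hBB : Bᵀ * Ai * B = D - (D - Bᵀ * Ai * B) := by abel
  rw [Matrix.fromBlocks_add, Matrix.fromBlocks_multiply, ← Matrix.fromBlocks_one,
    Matrix.fromBlocks_inj]
  refine ⟨?_, ?_, ?_, ?_⟩
  · simp only [Matrix.mul_add, Matrix.mul_neg, ← Matrix.mul_assoc, hA, Matrix.one_mul,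
      Matrix.mul_zero, add_zero]
    abel
  · simp only [Matrix.mul_neg, ← Matrix.mul_assoc, hA, Matrix.one_mul, Matrix.mul_zero,
      add_zero, zero_add]
    abel
  · simp only [Matrix.mul_add, Matrix.mul_neg, ← Matrix.mul_assoc, Matrix.mul_zero,
      add_zero, zero_add]
    rw [hBB, Matrix.sub_mul, Matrix.sub_mul, Matrix.sub_mul, hS, Matrix.one_mul]
    abel
  · simp only [Matrix.mul_neg, ← Matrix.mul_assoc, Matrix.mul_zero, add_zero, zero_add]
    rw [hBB, Matrix.sub_mul, hS]
    abel

/-- Weighting vector of a subset via Schur complement. The points of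
`X ⊂ ℝⁿ` are indexed by `Fin k ⊕ Fin l`, with those of `Y` (indexed by `Fin k`) first, so
`ζ_X = [[ζ_Y, B], [Bᵀ, ζ_Ȳ]]`. With `ρ = ρ_{ζ_X ζ_Y}` built from `ζ_Y⁻¹` and the Schur
complement `(ζ_X / ζ_Y)⁻¹`, one has `w_X = [w_Y; 0] + ρ 𝟙` and
`Mag X = Mag Y + 𝟙ᵀ ρ 𝟙`. -/
theorem weighting_subset_schur (n k l : ℕ)
    (q : Fin k ⊕ Fin l → EuclideanSpace ℝ (Fin n)) (hq : Function.Injective q) :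
    let ζX : Matrix (Fin k ⊕ Fin l) (Fin k ⊕ Fin l) ℝ :=
      Matrix.of fun a b => Real.exp (-dist (q a) (q b))
    let ζY : Matrix (Fin k) (Fin k) ℝ :=
      Matrix.of fun i j => Real.exp (-dist (q (Sum.inl i)) (q (Sum.inl j)))
    let B : Matrix (Fin k) (Fin l) ℝ :=
      Matrix.of fun i j => Real.exp (-dist (q (Sum.inl i)) (q (Sum.inr j)))
    let ζYbar : Matrix (Fin l) (Fin l) ℝ :=
      Matrix.of fun i j => Real.exp (-dist (q (Sum.inr i)) (q (Sum.inr j)))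
    let S : Matrix (Fin l) (Fin l) ℝ := ζYbar - Bᵀ * ζY⁻¹ * B
    let ρ : Matrix (Fin k ⊕ Fin l) (Fin k ⊕ Fin l) ℝ :=
      Matrix.fromBlocks (ζY⁻¹ * B * S⁻¹ * Bᵀ * ζY⁻¹) (-(ζY⁻¹ * B * S⁻¹))
        (-(S⁻¹ * Bᵀ * ζY⁻¹)) S⁻¹
    (ζX⁻¹ *ᵥ fun _ => (1 : ℝ))
        = Sum.elim (ζY⁻¹ *ᵥ fun _ => (1 : ℝ)) 0 + (ρ *ᵥ fun _ => (1 : ℝ)) ∧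
    (∑ a, (ζX⁻¹ *ᵥ fun _ => (1 : ℝ)) a)
        = (∑ i, (ζY⁻¹ *ᵥ fun _ => (1 : ℝ)) i)
          + (fun _ => (1 : ℝ)) ⬝ᵥ (ρ *ᵥ fun _ => (1 : ℝ)) := by
  intro ζX ζY B ζYbar S ρ
  classical
  have hXpd : ζX.PosDef := MagAux.exp_dist_posDef q hq
  have hYpd : ζY.PosDef :=
    MagAux.exp_dist_posDef (fun i => q (Sum.inl i))
      (fun i j h => Sum.inl_injective (hq h))
  have hYunit : IsUnit ζY.det := isUnit_iff_ne_zero.mpr (ne_of_gt hYpd.det_pos)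
  have hXunit : IsUnit ζX.det := isUnit_iff_ne_zero.mpr (ne_of_gt hXpd.det_pos)
  have hblock : ζX = Matrix.fromBlocks ζY B Bᵀ ζYbar := by
    ext a b
    rcases a with i | i <;> rcases b with j | j
    · rfl
    · rfl
    · show Real.exp (-dist (q (Sum.inr i)) (q (Sum.inl j))) = B j i
      show Real.exp (-dist (q (Sum.inr i)) (q (Sum.inl j)))
          = Real.exp (-dist (q (Sum.inl j)) (q (Sum.inr i)))
      rw [dist_comm (q (Sum.inr i)) (q (Sum.inl j))]
    · rfl
  haveI : Invertible ζY := ζY.invertibleOfIsUnitDet hYunit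
  have hSdef : S = ζYbar - Bᵀ * ζY⁻¹ * B := rfl
  have hρdef : ρ = Matrix.fromBlocks (ζY⁻¹ * B * S⁻¹ * Bᵀ * ζY⁻¹) (-(ζY⁻¹ * B * S⁻¹))
      (-(S⁻¹ * Bᵀ * ζY⁻¹)) S⁻¹ := rfl
  have hdet : ζX.det = ζY.det * S.det := by
    rw [hblock, Matrix.det_fromBlocks₁₁, Matrix.invOf_eq_nonsing_inv, ← hSdef]
  have hSunit : IsUnit S.det := by
    rw [isUnit_iff_ne_zero]
    intro h0
    rw [hdet, h0, mul_zero] at hXunit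
    exact hXunit.ne_zero rfl
  have hY1 : ζY * ζY⁻¹ = 1 := Matrix.mul_nonsing_inv _ hYunit
  have hS1 : (ζYbar - Bᵀ * ζY⁻¹ * B) * S⁻¹ = 1 := by
    rw [← hSdef]; exact Matrix.mul_nonsing_inv _ hSunit
  have hmul : ζX * (Matrix.fromBlocks ζY⁻¹ 0 0 0 + ρ) = 1 := by
    rw [hblock, hρdef]
    exact MagAux.schur_right_inv ζY B ζYbar ζY⁻¹ S⁻¹ hY1 hS1
  have hinv : ζX⁻¹ = Matrix.fromBlocks ζY⁻¹ 0 0 0 + ρ := Matrix.inv_eq_right_inv hmul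
  have hone : (fun _ : Fin k ⊕ Fin l => (1:ℝ))
      = Sum.elim (fun _ : Fin k => (1:ℝ)) (fun _ : Fin l => (1:ℝ)) := by
    funext ab; rcases ab with i | i <;> rfl
  have h1 : (ζX⁻¹ *ᵥ fun _ => (1 : ℝ))
      = Sum.elim (ζY⁻¹ *ᵥ fun _ => (1 : ℝ)) 0 + (ρ *ᵥ fun _ => (1 : ℝ)) := by
    rw [hinv, Matrix.add_mulVec]
    congr 1
    rw [hone, Matrix.fromBlocks_mulVec]
    simp only [Matrix.zero_mulVec, add_zero, zero_add]
    rfl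
  refine ⟨h1, ?_⟩
  rw [h1]
  simp only [Pi.add_apply, Finset.sum_add_distrib, Fintype.sum_sum_type, Sum.elim_inl,
    Sum.elim_inr, Pi.zero_apply, Finset.sum_const_zero, add_zero, dotProduct, one_mul]
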